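/- In the discrimination experiment corresponding to the 32-Game with qubit states, the success probability is bounded by p_guess ≤ 1/2 + (1/18)·Σᵢ ‖ρᵢ − ρ_{i+1} − ρ_{i+2}‖₁ ≤ 5/6, for any density matrices ρ₀, ρ₁, ρ₂ on ℂ². -/

import Mathlib

open Matrix ComplexOrder

/-- The trace norm ‖A‖₁ = tr √(AᴴA) of a 2×2 complex matrix. -/
noncomputable def traceNorm (A : Matrix (Fin 2) (Fin 2) ℂ) : ℝ :=
  (((Matrix.posSemidef_conjTranspose_mul_self A).1.eigenvectorUnitary.1 *
    diagonal (((↑) : ℝ → ℂ) ∘ (√·) ∘ (Matrix.posSemidef_conjTranspose_mul_self A).1.eigenvalues) *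
    (star (Matrix.posSemidef_conjTranspose_mul_self A).1.eigenvectorUnitary :
      Matrix (Fin 2) (Fin 2) ℂ)).trace).re


variable {n : Type*} [Fintype n] [DecidableEq n]

noncomputable def herm {D : Matrix n n ℂ} (hD : D.IsHermitian) (f : ℝ → ℝ) : Matrix n n ℂ :=
  (hD.eigenvectorUnitary : Matrix n n ℂ) * diagonal (Complex.ofReal ∘ f ∘ hD.eigenvalues)
    * star (hD.eigenvectorUnitary : Matrix n n ℂ)

lemma herm_mul {D : Matrix n n ℂ} (hD : D.IsHermitian) (f g : ℝ → ℝ) :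
    herm hD f * herm hD g = herm hD (fun x => f x * g x) := by
  unfold herm
  have h1 : (star (hD.eigenvectorUnitary : Matrix n n ℂ)) * (hD.eigenvectorUnitary : Matrix n n ℂ) = 1 :=
    Unitary.coe_star_mul_self _
  calc (hD.eigenvectorUnitary : Matrix n n ℂ) * diagonal (Complex.ofReal ∘ f ∘ hD.eigenvalues)
    * star (hD.eigenvectorUnitary : Matrix n n ℂ) * ((hD.eigenvectorUnitary : Matrix n n ℂ) * diagonal (Complex.ofReal ∘ g ∘ hD.eigenvalues)
    * star (hD.eigenvectorUnitary : Matrix n n ℂ))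
      = (hD.eigenvectorUnitary : Matrix n n ℂ) * (diagonal (Complex.ofReal ∘ f ∘ hD.eigenvalues)
        * diagonal (Complex.ofReal ∘ g ∘ hD.eigenvalues)) * star (hD.eigenvectorUnitary : Matrix n n ℂ) := by
        simp only [mul_assoc]
        rw [← mul_assoc (star (hD.eigenvectorUnitary : Matrix n n ℂ)) (hD.eigenvectorUnitary : Matrix n n ℂ), h1, one_mul]
    _ = _ := by rw [diagonal_mul_diagonal]; congr 2; funext i j; simp [diagonal]

lemma herm_id {D : Matrix n n ℂ} (hD : D.IsHermitian) : herm hD id = D := by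
  rw [herm]; exact hD.spectral_theorem.symm

lemma herm_trace {D : Matrix n n ℂ} (hD : D.IsHermitian) (f : ℝ → ℝ) :
    (herm hD f).trace = ∑ i, (f (hD.eigenvalues i) : ℂ) := by
  rw [herm, trace_mul_cycle, Unitary.coe_star_mul_self, one_mul, trace_diagonal]
  simp

lemma herm_posSemidef {D : Matrix n n ℂ} (hD : D.IsHermitian) {f : ℝ → ℝ}
    (hf : ∀ x, 0 ≤ f x) : (herm hD f).PosSemidef := by
  apply PosSemidef.mul_mul_conjTranspose_same
  · refine posSemidef_diagonal_iff.mpr fun i ↦ ?_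
    rw [Function.comp_apply, Complex.le_def]
    simp [hf _]

lemma herm_sub {D : Matrix n n ℂ} (hD : D.IsHermitian) (f g : ℝ → ℝ) :
    herm hD f - herm hD g = herm hD (fun x => f x - g x) := by
  unfold herm
  rw [← sub_mul, ← mul_sub, diagonal_sub]
  congr 2; funext i j; simp [diagonal]


lemma traceNorm_herm {D : Matrix (Fin 2) (Fin 2) ℂ} (hD : D.IsHermitian) :
    traceNorm D = ∑ i, |hD.eigenvalues i| := by
  have hS : (herm hD (fun x => |x|)).PosSemidef := herm_posSemidef hD (fun x => abs_nonneg x)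
  have hsq : (herm hD (fun x => |x|)) ^ 2 = Dᴴ * D := by
    conv_rhs => rw [hD.eq]
    conv_rhs => rw [← herm_id hD]
    rw [sq, herm_mul, herm_mul]
    funext x; simp [abs_mul_abs_self]
  have this : herm (posSemidef_conjTranspose_mul_self D).1 Real.sqrt = herm hD (fun x => |x|) := by
    open MatrixOrder in
    have e1 : CFC.sqrt (Dᴴ * D) = herm (posSemidef_conjTranspose_mul_self D).1 Real.sqrt := by
      rw [CFC.sqrt_eq_cfc, cfc_nnreal_eq_real _ (Dᴴ * D) (posSemidef_conjTranspose_mul_self D).nonneg,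
        (posSemidef_conjTranspose_mul_self D).1.cfc_eq, IsHermitian.cfc, Unitary.conjStarAlgAut_apply, herm]
      congr 3; funext i
      simp only [Function.comp_apply, Real.coe_sqrt, Real.coe_toNNReal']
      rw [max_eq_left ((posSemidef_conjTranspose_mul_self D).eigenvalues_nonneg i)]
      rfl
    open MatrixOrder in
    rw [← e1, CFC.sqrt_eq_iff _ _ (posSemidef_conjTranspose_mul_self D).nonneg hS.nonneg, ← sq, hsq]
  show (herm (posSemidef_conjTranspose_mul_self D).1 Real.sqrt).trace.re = _
  rw [this, herm_trace, Complex.re_sum]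
  simp

lemma psd_trace_re_nonneg {A : Matrix n n ℂ} (hA : A.PosSemidef) : 0 ≤ A.trace.re := by
  rw [trace, Complex.re_sum]
  apply Finset.sum_nonneg
  intro i _
  have h : 0 ≤ A i i := hA.diag_nonneg
  exact (Complex.le_def.mp h).1

lemma psd_trace_mul_re_nonneg {A B : Matrix n n ℂ} (hA : A.PosSemidef) (hB : B.PosSemidef) :
    0 ≤ ((A * B).trace).re := by
  open MatrixOrder in
  obtain ⟨C, hC⟩ := CStarAlgebra.nonneg_iff_eq_star_mul_self.mp hA.nonneg
  rw [hC, mul_assoc, trace_mul_comm]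
  exact psd_trace_re_nonneg (hB.mul_mul_conjTranspose_same C)

lemma herm_trace_re {D : Matrix n n ℂ} (hD : D.IsHermitian) (f : ℝ → ℝ) :
    ((herm hD f).trace).re = ∑ i, f (hD.eigenvalues i) := by
  rw [herm_trace, Complex.re_sum]; simp

lemma eig_sum {D : Matrix n n ℂ} (hD : D.IsHermitian) :
    ∑ i, hD.eigenvalues i = D.trace.re := by
  conv_rhs => rw [← herm_id hD]
  rw [herm_trace_re]; rfl

lemma eig_sq_sum {D : Matrix n n ℂ} (hD : D.IsHermitian) :
    ∑ i, (hD.eigenvalues i)^2 = ((D * D).trace).re := by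
  conv_rhs => rw [← herm_id hD, herm_mul]
  rw [herm_trace_re]
  congr 1; funext i; simp [sq]

lemma key_bound {D E : Matrix n n ℂ} (hD : D.IsHermitian) (hE : E.PosSemidef)
    (hE1 : (1 - E).PosSemidef) :
    ((E * D).trace).re ≤ ∑ i, max (hD.eigenvalues i) 0 := by
  set P := herm hD (fun x => max x 0) with hPdef
  set N := herm hD (fun x => max (-x) 0) with hNdef
  have hP : P.PosSemidef := herm_posSemidef hD (fun x => le_max_right _ _)
  have hN : N.PosSemidef := herm_posSemidef hD (fun x => le_max_right _ _)
  have hPN : P - N = D := by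
    rw [hPdef, hNdef, herm_sub]
    have : (fun x => max x 0 - max (-x) 0) = (id : ℝ → ℝ) := by
      funext x; simp [max_zero_sub_max_neg_zero_eq_self]
    rw [this, herm_id]
  have h1 : 0 ≤ ((E * N).trace).re := psd_trace_mul_re_nonneg hE hN
  have h2 : 0 ≤ (((1 - E) * P).trace).re := psd_trace_mul_re_nonneg hE1 hP
  have h3 : (((1 - E) * P).trace).re = (P.trace).re - ((E * P).trace).re := by
    rw [sub_mul, one_mul, trace_sub, Complex.sub_re]
  have h4 : ((E * D).trace).re = ((E * P).trace).re - ((E * N).trace).re := by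
    rw [← hPN, mul_sub, trace_sub, Complex.sub_re]
  have h5 : (P.trace).re = ∑ i, max (hD.eigenvalues i) 0 := herm_trace_re hD _
  linarith

lemma helstrom {D E : Matrix (Fin 2) (Fin 2) ℂ} (hD : D.IsHermitian) (hDt : D.trace = -1)
    (hE : E.PosSemidef) (hE1 : (1 - E).PosSemidef) :
    ((E * D).trace).re ≤ (traceNorm D - 1) / 2 := by
  have h := key_bound hD hE hE1
  have ht : ∑ i, hD.eigenvalues i = -1 := by rw [eig_sum, hDt]; norm_num
  rw [traceNorm_herm hD]
  rw [Fin.sum_univ_two] at h ht ⊢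
  rcases abs_cases (hD.eigenvalues 0) with ⟨e0, _⟩ | ⟨e0, _⟩ <;>
    rcases abs_cases (hD.eigenvalues 1) with ⟨e1, _⟩ | ⟨e1, _⟩ <;>
    rw [e0, e1] <;>
    simp [max_def] at h <;> split_ifs at h <;> linarith

lemma tracenorm_quad {D : Matrix (Fin 2) (Fin 2) ℂ} (hD : D.IsHermitian) (hDt : D.trace = -1) :
    traceNorm D ≤ (2 * ((D * D).trace).re + 3) / 4 := by
  rw [traceNorm_herm hD, ← eig_sq_sum hD]
  have ht : ∑ i, hD.eigenvalues i = -1 := by rw [eig_sum, hDt]; norm_num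
  simp only [Fin.sum_univ_two] at ht ⊢
  rcases abs_cases (hD.eigenvalues 0) with ⟨e0, _⟩ | ⟨e0, _⟩ <;>
    rcases abs_cases (hD.eigenvalues 1) with ⟨e1, _⟩ | ⟨e1, _⟩ <;>
    rw [e0, e1] <;> nlinarith [sq_nonneg (hD.eigenvalues 0 - hD.eigenvalues 1),
      sq_nonneg (hD.eigenvalues 0 + hD.eigenvalues 1 + 1),
      sq_nonneg (hD.eigenvalues 0 - 1), sq_nonneg (hD.eigenvalues 1 - 1),
      sq_nonneg (hD.eigenvalues 0 - hD.eigenvalues 1 - 2),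
      sq_nonneg (hD.eigenvalues 1 - hD.eigenvalues 0 - 2),
      sq_nonneg (hD.eigenvalues 0 + 1), sq_nonneg (hD.eigenvalues 1 + 1)]

lemma psd_trace_sq_le {A : Matrix (Fin 2) (Fin 2) ℂ} (h : A.PosSemidef) (h1 : A.trace = 1) :
    ((A * A).trace).re ≤ 1 := by
  rw [← eig_sq_sum h.1]
  have ht : ∑ i, h.1.eigenvalues i = 1 := by rw [eig_sum, h1]; norm_num
  have h0 := h.eigenvalues_nonneg 0
  have h1' := h.eigenvalues_nonneg 1
  rw [Fin.sum_univ_two] at ht ⊢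
  nlinarith

lemma herm_trace_sq_ge {A : Matrix (Fin 2) (Fin 2) ℂ} (h : A.IsHermitian) (h3 : A.trace = 3) :
    9/2 ≤ ((A * A).trace).re := by
  rw [← eig_sq_sum h]
  have ht : ∑ i, h.eigenvalues i = 3 := by rw [eig_sum, h3]; norm_num
  rw [Fin.sum_univ_two] at ht ⊢
  nlinarith [sq_nonneg (h.eigenvalues 0 - h.eigenvalues 1)]

/-- Discrimination experiment for the 32-Game: for any qubit density matrices
ρ₀,ρ₁,ρ₂ and any POVM elements E_b (0 ≤ E_b ≤ I) used by Bob, the success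
probability satisfies
p_guess ≤ 1/2 + (1/18)·Σᵢ ‖ρᵢ − ρ_{i+1} − ρ_{i+2}‖₁ ≤ 5/6. -/
theorem stmt_11 (ρ : Fin 3 → Matrix (Fin 2) (Fin 2) ℂ)
    (hρ : ∀ i, (ρ i).PosSemidef) (hρ1 : ∀ i, (ρ i).trace = 1)
    (E : Fin 3 → Matrix (Fin 2) (Fin 2) ℂ)
    (hE : ∀ b, (E b).PosSemidef) (hE1 : ∀ b, (1 - E b).PosSemidef) :
    (∑ a : Fin 3, ∑ b : Fin 3,
        (1 / 9 : ℝ) *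
          (if a = b then (E b * ρ a).trace.re else ((1 - E b) * ρ a).trace.re)) ≤
        1 / 2 + 1 / 18 * ∑ i : Fin 3, traceNorm (ρ i - ρ (i + 1) - ρ (i + 2)) ∧
      1 / 2 + 1 / 18 * (∑ i : Fin 3, traceNorm (ρ i - ρ (i + 1) - ρ (i + 2))) ≤ 5 / 6 := by
  have hherm : ∀ b : Fin 3, (ρ b - ρ (b+1) - ρ (b+2)).IsHermitian :=
    fun b => ((hρ b).1.sub (hρ (b+1)).1).sub (hρ (b+2)).1
  have hDt : ∀ b : Fin 3, (ρ b - ρ (b+1) - ρ (b+2)).trace = -1 := by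
    intro b; rw [trace_sub, trace_sub, hρ1, hρ1, hρ1]; ring
  have hkey : ∀ b : Fin 3, ((E b * ρ b).trace).re - ((E b * ρ (b+1)).trace).re
      - ((E b * ρ (b+2)).trace).re ≤ (traceNorm (ρ b - ρ (b+1) - ρ (b+2)) - 1)/2 := by
    intro b
    have h := helstrom (hherm b) (hDt b) (hE b) (hE1 b)
    rwa [mul_sub, mul_sub, trace_sub, trace_sub, Complex.sub_re, Complex.sub_re] at h
  have hone : ∀ b a : Fin 3, (((1 - E b) * ρ a).trace).re = 1 - ((E b * ρ a).trace).re := by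
    intro b a
    rw [sub_mul, one_mul, trace_sub, Complex.sub_re, hρ1]
    norm_num
  have k0 := hkey 0; have k1 := hkey 1; have k2 := hkey 2
  simp only [show ((0:Fin 3)+1) = 1 from rfl, show ((0:Fin 3)+2) = 2 from rfl,
    show ((1:Fin 3)+1) = 2 from rfl, show ((1:Fin 3)+2) = 0 from rfl,
    show ((2:Fin 3)+1) = 0 from rfl, show ((2:Fin 3)+2) = 1 from rfl] at k0 k1 k2
  constructor
  · simp only [Fin.sum_univ_three, show ((0:Fin 3)+1) = 1 from rfl,
      show ((0:Fin 3)+2) = 2 from rfl, show ((1:Fin 3)+1) = 2 from rfl,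
      show ((1:Fin 3)+2) = 0 from rfl, show ((2:Fin 3)+1) = 0 from rfl,
      show ((2:Fin 3)+2) = 1 from rfl, hone]
    norm_num
    rw [if_neg (by decide : ¬((0:Fin 3) = 2)), if_neg (by decide : ¬((1:Fin 3) = 2)),
      if_neg (by decide : ¬((2:Fin 3) = 0)), if_neg (by decide : ¬((2:Fin 3) = 1))]
    linarith
  · have q0 := psd_trace_sq_le (hρ 0) (hρ1 0)
    have q1 := psd_trace_sq_le (hρ 1) (hρ1 1)
    have q2 := psd_trace_sq_le (hρ 2) (hρ1 2)
    have hσ : (ρ 0 + ρ 1 + ρ 2).IsHermitian := ((hρ 0).1.add (hρ 1).1).add (hρ 2).1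
    have hσt : (ρ 0 + ρ 1 + ρ 2).trace = 3 := by
      rw [trace_add, trace_add, hρ1, hρ1, hρ1]; norm_num
    have w := herm_trace_sq_ge hσ hσt
    have t0 := tracenorm_quad (hherm 0) (hDt 0)
    have t1 := tracenorm_quad (hherm 1) (hDt 1)
    have t2 := tracenorm_quad (hherm 2) (hDt 2)
    simp only [show ((0:Fin 3)+1) = 1 from rfl, show ((0:Fin 3)+2) = 2 from rfl,
      show ((1:Fin 3)+1) = 2 from rfl, show ((1:Fin 3)+2) = 0 from rfl,
      show ((2:Fin 3)+1) = 0 from rfl, show ((2:Fin 3)+2) = 1 from rfl] at t0 t1 t2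
    have hm : (ρ 0 - ρ 1 - ρ 2)*(ρ 0 - ρ 1 - ρ 2) + (ρ 1 - ρ 2 - ρ 0)*(ρ 1 - ρ 2 - ρ 0)
        + (ρ 2 - ρ 0 - ρ 1)*(ρ 2 - ρ 0 - ρ 1) + (ρ 0 + ρ 1 + ρ 2)*(ρ 0 + ρ 1 + ρ 2)
        = (ρ 0*ρ 0 + ρ 1*ρ 1 + ρ 2*ρ 2) + (ρ 0*ρ 0 + ρ 1*ρ 1 + ρ 2*ρ 2)
        + (ρ 0*ρ 0 + ρ 1*ρ 1 + ρ 2*ρ 2) + (ρ 0*ρ 0 + ρ 1*ρ 1 + ρ 2*ρ 2) := by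
      noncomm_ring
    have hid := congrArg (fun M => (Matrix.trace M).re) hm
    simp only [trace_add, Complex.add_re] at hid
    simp only [Fin.sum_univ_three, show ((0:Fin 3)+1) = 1 from rfl,
      show ((0:Fin 3)+2) = 2 from rfl, show ((1:Fin 3)+1) = 2 from rfl,
      show ((1:Fin 3)+2) = 0 from rfl, show ((2:Fin 3)+1) = 0 from rfl,
      show ((2:Fin 3)+2) = 1 from rfl]
    linarith
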